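/- Let K be a field, p a prime different from char(K), ε ∈ K_sep a primitive p-th root of unity, φ a generator of Gal(K(ε)/K), and s an integer with φ(ε) = ε^s. For λ ∈ K(ε)^{*} with λ ∉ K(ε)^{*p} and φ(λ)·λ^{−s} ∈ K(ε)^{*p}, the field L′ obtained from K(ε) by adjoining a p-th root of λ is a cyclic extension of K of degree p·[K(ε) : K]; in particular L′ contains a cyclic extension of K of degree p. -/

import Mathlib

noncomputable section

open IsLocalRing

local notation "ℤᵐ⁰" => WithZero (Multiplicative ℤ)

/-- The value group of a valuation on a field `K`, as a subgroup of the units of the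
value monoid: the subgroup generated by the values of nonzero elements of `K`. -/
def valGroup {K Γ : Type*} [Field K] [LinearOrderedCommGroupWithZero Γ]
    (v : Valuation K Γ) : Subgroup Γˣ :=
  Subgroup.closure { g : Γˣ | ∃ x : K, x ≠ 0 ∧ v x = ↑g }

/-- The subfield of `p`-th powers of a field `k` (for `k` of characteristic `p` this is
the image of the Frobenius). -/
def pthPowers (k : Type*) [Field k] (p : ℕ) : Subfield k :=
  Subfield.closure { y : k | ∃ x : k, x ^ p = y }

set_option linter.unusedSectionVars false
set_option maxHeartbeats 1000000

open Polynomial IntermediateField Module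

section AlbertAux

variable {K L L' : Type} [Field K] [Field L] [Algebra K L] [Field L']
  [Algebra L L'] [Algebra K L'] [IsScalarTower K L L']

theorem albert_aux_ext {lam' : L'} (hadj : IntermediateField.adjoin L {lam'} = ⊤)
    {Ψ₁ Ψ₂ : L' ≃ₐ[K] L'}
    (hL : ∀ x : L, Ψ₁ (algebraMap L L' x) = Ψ₂ (algebraMap L L' x))
    (hl : Ψ₁ lam' = Ψ₂ lam') : Ψ₁ = Ψ₂ := by
  ext x
  have hx : x ∈ IntermediateField.adjoin L {lam'} := hadj ▸ IntermediateField.mem_top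
  induction hx using IntermediateField.adjoin_induction with
  | mem y hy => rw [Set.mem_singleton_iff] at hy; subst hy; exact hl
  | algebraMap y => exact hL y
  | add a b _ _ ha hb => rw [map_add, map_add, ha, hb]
  | inv a _ ha => rw [map_inv₀, map_inv₀, ha]
  | mul a b _ _ ha hb => rw [map_mul, map_mul, ha, hb]

theorem albert_aux_exists {p : ℕ} (hp : p.Prime) {lam : L}
    (hnp : ¬∃ y : L, y ^ p = lam)
    {lam' : L'} (hlp : lam' ^ p = algebraMap L L' lam)
    (hadj : IntermediateField.adjoin L {lam'} = ⊤)
    [FiniteDimensional K L']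
    (ψ : L ≃ₐ[K] L) (r : L') (hr : r ^ p = algebraMap L L' (ψ lam)) :
    ∃ Ψ : L' ≃ₐ[K] L',
      (∀ x : L, Ψ (algebraMap L L' x) = algebraMap L L' (ψ x)) ∧ Ψ lam' = r := by
  have hint : IsIntegral L lam' :=
    ⟨X ^ p - C lam, monic_X_pow_sub_C lam hp.ne_zero, by
      simp [hlp]⟩
  have hirr : Irreducible (X ^ p - C lam) :=
    X_pow_sub_C_irreducible_of_prime hp (fun b hb => hnp ⟨b, hb⟩)
  have hmin : minpoly L lam' = X ^ p - C lam :=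
    (minpoly.eq_of_irreducible_of_monic hirr
      (by rw [map_sub, map_pow, aeval_X, aeval_C, hlp, sub_self])
      (monic_X_pow_sub_C lam hp.ne_zero)).symm
  let e : AdjoinRoot (minpoly L lam') ≃ₐ[L] L' :=
    (IntermediateField.adjoinRootEquivAdjoin L hint).trans
      ((IntermediateField.equivOfEq hadj).trans IntermediateField.topEquiv)
  have heroot : e (AdjoinRoot.root (minpoly L lam')) = lam' := by
    simp [e, IntermediateField.adjoinRootEquivAdjoin_apply_root]
  let i : L →+* L' := (algebraMap L L').comp ψ.toAlgHom.toRingHom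
  have hev : (minpoly L lam').eval₂ i r = 0 := by
    rw [hmin, eval₂_sub, eval₂_X_pow, eval₂_C, hr]
    simp [i]
  let g : AdjoinRoot (minpoly L lam') →+* L' := AdjoinRoot.lift i r hev
  have key : ∀ x : L, g (e.symm (algebraMap L L' x)) = algebraMap L L' (ψ x) := by
    intro x
    have h1 : e.symm (algebraMap L L' x) = algebraMap L (AdjoinRoot (minpoly L lam')) x := by
      rw [AlgEquiv.symm_apply_eq, AlgEquiv.commutes]
    rw [h1, AdjoinRoot.algebraMap_eq, AdjoinRoot.lift_of]
    rfl
  let Φ : L' →ₐ[K] L' :=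
    { toRingHom := g.comp (e.symm : L' ≃+* AdjoinRoot (minpoly L lam')).toRingHom
      commutes' := by
        intro c
        show g (e.symm (algebraMap K L' c)) = algebraMap K L' c
        rw [IsScalarTower.algebraMap_apply K L L' c, key, AlgEquiv.commutes] }
  have hΦL : ∀ x : L, Φ (algebraMap L L' x) = algebraMap L L' (ψ x) := fun x => key x
  have hΦl : Φ lam' = r := by
    have h2 : e.symm lam' = AdjoinRoot.root (minpoly L lam') := by
      rw [AlgEquiv.symm_apply_eq, heroot]
    show g (e.symm lam') = r
    rw [h2]
    exact AdjoinRoot.lift_root hev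
  exact ⟨AlgEquiv.ofBijective Φ Φ.bijective, hΦL, hΦl⟩

end AlbertAux

/-- Albert's criterion. Let `K` be a field, `p` a prime different from
`char K`, `L = K(ε)` for a primitive `p`-th root of unity `ε`, `φ` a generator of
`Gal(L/K)` and `s` an integer with `φ ε = ε ^ s`.  If `λ ∈ L^{*}` is not a `p`-th power but
`φ(λ)·λ^{−s}` is, then `L′ = L(λ^{1/p})` is a cyclic extension of `K` of degree
`p·[L : K]`; in particular it contains a cyclic extension of `K` of degree `p`. -/
theorem albert_cyclic_criterion
    {K L : Type} [Field K] [Field L] [Algebra K L]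
    (p : ℕ) (hp : p.Prime) (hchar : (p : K) ≠ 0)
    (ε : L) (hε : IsPrimitiveRoot ε p)
    (hgen : IntermediateField.adjoin K {ε} = ⊤)
    (φ : L ≃ₐ[K] L) (hφ : ∀ ψ : L ≃ₐ[K] L, ψ ∈ Subgroup.zpowers φ)
    (s : ℤ) (hs : φ ε = ε ^ s)
    (lam : L) (hlam0 : lam ≠ 0)
    (hnp : ¬ ∃ y : L, y ^ p = lam)
    (hnorm : ∃ y : L, φ lam * (lam ^ s)⁻¹ = y ^ p) :
    ∀ (L' : Type) [Field L'] [Algebra L L'] [Algebra K L'] [IsScalarTower K L L']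
      (lam' : L'),
      lam' ^ p = algebraMap L L' lam →
      IntermediateField.adjoin L {lam'} = ⊤ →
      IsGalois K L' ∧ IsCyclic (L' ≃ₐ[K] L') ∧
      Module.finrank K L' = p * Module.finrank K L ∧
      ∃ E : IntermediateField K L',
        Module.finrank K E = p ∧ IsGalois K E ∧ IsCyclic (E ≃ₐ[K] E) := by
  intro L' _ _ _ _ lam' hlp hadj
  haveI : Fact p.Prime := ⟨hp⟩
  haveI : NeZero p := ⟨hp.ne_zero⟩
  have hppos : 0 < p := hp.pos
  -- basic facts about ε
  have hεp : ε ^ p = 1 := hε.pow_eq_one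
  have hε1 : ε ≠ 1 := hε.ne_one hp.one_lt
  have hεint : IsIntegral K ε :=
    ⟨X ^ p - C 1, monic_X_pow_sub_C 1 hp.ne_zero, by simp [hεp]⟩
  -- finite dimensionality of L over K
  haveI hfdtop : FiniteDimensional K (⊤ : IntermediateField K L) := by
    rw [← hgen]; exact IntermediateField.adjoin.finiteDimensional hεint
  haveI hfdKL : FiniteDimensional K L :=
    (IntermediateField.topEquiv (F := K) (E := L)).toLinearEquiv.finiteDimensional
  -- L is a splitting field of X^p - 1 over K
  have hXp0 : (X ^ p - 1 : K[X]) ≠ 0 := by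
    have := X_pow_sub_C_ne_zero hppos (1 : K); simpa using this
  have hsf : IsSplittingField K L (X ^ p - 1) := by
    constructor
    · have hmap : (X ^ p - 1 : K[X]).map (algebraMap K L) = X ^ p - 1 := by
        rw [Polynomial.map_sub, Polynomial.map_pow, map_X, Polynomial.map_one]
      rw [hmap, splits_iff_card_roots]
      have hroots : (X ^ p - 1 : L[X]).roots = nthRoots p (1 : L) := by
        simp [nthRoots]
      rw [hroots, hε.card_nthRoots,
        show (X ^ p - 1 : L[X]) = X ^ p - C 1 by rw [map_one], natDegree_X_pow_sub_C]
      exact if_pos ⟨ε, hεp⟩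
    · have hεmem : ε ∈ (X ^ p - 1 : K[X]).rootSet L := by
        rw [mem_rootSet]
        constructor
        · exact hXp0
        · simp [hεp]
      have halg : ∀ x ∈ (X ^ p - 1 : K[X]).rootSet L, IsAlgebraic K x := by
        intro x hx
        rw [mem_rootSet] at hx
        exact (IsIntegral.isAlgebraic ⟨X ^ p - C 1, monic_X_pow_sub_C 1 hp.ne_zero, by
          have := hx.2; simp only [map_sub, map_pow, map_one, aeval_X] at this ⊢
          simpa using this⟩)
      have htop : IntermediateField.adjoin K ((X ^ p - 1 : K[X]).rootSet L) = ⊤ := by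
        rw [eq_top_iff, ← hgen]
        exact IntermediateField.adjoin.mono K _ _ (Set.singleton_subset_iff.mpr hεmem)
      have := IntermediateField.adjoin_toSubalgebra_of_isAlgebraic halg
      rw [htop] at this
      rw [← this]
      rfl
  have hsep : (X ^ p - 1 : K[X]).Separable := by
    have := separable_X_pow_sub_C (1 : K) hchar one_ne_zero
    simpa using this
  haveI hGalKL : IsGalois K L := IsGalois.of_separable_splitting_field (p := X ^ p - 1) hsep
  -- m = [L : K]
  set m := finrank K L with hm
  have hm_card : Fintype.card (L ≃ₐ[K] L) = m := by
    rw [← Nat.card_eq_fintype_card]; exact IsGalois.card_aut_eq_finrank K L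
  have hφtop : Subgroup.zpowers φ = ⊤ := Subgroup.eq_top_iff' _ |>.mpr hφ
  have hφord : orderOf φ = m := by
    rw [← Nat.card_zpowers, hφtop]
    rw [Subgroup.card_top, Nat.card_eq_fintype_card, hm_card]
  -- m ≤ p - 1, so p does not divide m
  have hq0 : (∑ i ∈ Finset.range p, (X : K[X]) ^ i) ≠ 0 := by
    intro h
    apply hchar
    have := congrArg (Polynomial.eval 1) h
    simpa using this
  have hqε : (Polynomial.aeval ε) (∑ i ∈ Finset.range p, (X : K[X]) ^ i) = 0 := by
    have hg : (∑ i ∈ Finset.range p, ε ^ i) * (ε - 1) = ε ^ p - 1 := geom_sum_mul ε p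
    rw [hεp, sub_self] at hg
    have hε10 : ε - 1 ≠ 0 := sub_ne_zero.mpr hε1
    have hsum : (∑ i ∈ Finset.range p, ε ^ i) = 0 := by
      rcases mul_eq_zero.mp hg with h | h
      · exact h
      · exact absurd h hε10
    simpa using hsum
  have hmle : m ≤ p - 1 := by
    have h1 : finrank K (IntermediateField.adjoin K {ε}) = (minpoly K ε).natDegree :=
      IntermediateField.adjoin.finrank hεint
    have h2 : finrank K (IntermediateField.adjoin K {ε}) = m := by
      rw [hgen]; exact IntermediateField.finrank_top'
    have h3 : minpoly K ε ∣ (∑ i ∈ Finset.range p, (X : K[X]) ^ i) := minpoly.dvd K ε hqε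
    have h4 : (∑ i ∈ Finset.range p, (X : K[X]) ^ i).natDegree ≤ p - 1 := by
      apply natDegree_sum_le_of_forall_le
      intro i hi
      rw [natDegree_X_pow]
      exact Nat.le_pred_of_lt (Finset.mem_range.mp hi)
    calc m = (minpoly K ε).natDegree := by rw [← h2, h1]
    _ ≤ _ := natDegree_le_of_dvd h3 hq0
    _ ≤ p - 1 := h4
  have hm0 : 0 < m := finrank_pos
  have hpm : ¬ p ∣ m := by
    intro hdvd
    have := Nat.le_of_dvd hm0 hdvd
    omega
  -- basic facts about lam' and L'
  have hmaplam0 : algebraMap L L' lam ≠ 0 := by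
    simpa using hlam0
  have hlam'0 : lam' ≠ 0 := by
    intro h
    apply hmaplam0
    rw [← hlp, h, zero_pow hp.ne_zero]
  have hint' : IsIntegral L lam' :=
    ⟨X ^ p - C lam, monic_X_pow_sub_C lam hp.ne_zero, by simp [hlp]⟩
  have hirr : Irreducible (X ^ p - C lam) :=
    X_pow_sub_C_irreducible_of_prime hp (fun b hb => hnp ⟨b, hb⟩)
  have hmin : minpoly L lam' = X ^ p - C lam :=
    (minpoly.eq_of_irreducible_of_monic hirr
      (by rw [map_sub, map_pow, aeval_X, aeval_C, hlp, sub_self])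
      (monic_X_pow_sub_C lam hp.ne_zero)).symm
  haveI hfdtop' : FiniteDimensional L (⊤ : IntermediateField L L') := by
    rw [← hadj]; exact IntermediateField.adjoin.finiteDimensional hint'
  haveI hfdLL' : FiniteDimensional L L' :=
    (IntermediateField.topEquiv (F := L) (E := L')).toLinearEquiv.finiteDimensional
  haveI hfdKL' : FiniteDimensional K L' := FiniteDimensional.trans K L L'
  have hrkLL' : finrank L L' = p := by
    have h1 : finrank L (IntermediateField.adjoin L {lam'}) = (minpoly L lam').natDegree :=
      IntermediateField.adjoin.finrank hint'
    have h2 : finrank L (IntermediateField.adjoin L {lam'}) = finrank L L' := by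
      rw [hadj]; exact IntermediateField.finrank_top'
    rw [← h2, h1, hmin, natDegree_X_pow_sub_C]
  have hrkKL' : finrank K L' = p * m := by
    rw [← Module.finrank_mul_finrank K L L', hrkLL', mul_comm]
  -- the primitive root in L'
  set ε' : L' := algebraMap L L' ε with hε'def
  have hinj : Function.Injective (algebraMap L L') := (algebraMap L L').injective
  have hε' : IsPrimitiveRoot ε' p := hε.map_of_injective hinj
  -- construct σ
  obtain ⟨σ, hσL, hσl⟩ := albert_aux_exists (K := K) hp hnp hlp hadj (1 : L ≃ₐ[K] L)
    (ε' * lam') (by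
      rw [mul_pow, ← map_pow, hεp, map_one, one_mul, hlp]
      rfl)
  have hσL' : ∀ x : L, σ (algebraMap L L' x) = algebraMap L L' x := fun x => hσL x
  -- construct φ'
  obtain ⟨y, hy⟩ := hnorm
  have hlams : lam ^ s ≠ 0 := zpow_ne_zero _ hlam0
  have hyp : y ^ p * lam ^ s = φ lam := by
    rw [← hy]
    field_simp
  obtain ⟨φ', hφ'L, hφ'l⟩ := albert_aux_exists (K := K) hp hnp hlp hadj φ
    (algebraMap L L' y * lam' ^ s) (by
      have h1 : ((lam' : L') ^ s) ^ p = (algebraMap L L' lam) ^ s := by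
        rw [← zpow_natCast (lam' ^ s) p, ← zpow_mul, mul_comm s (p : ℤ), zpow_mul,
          zpow_natCast, hlp]
      rw [mul_pow, h1, ← map_pow, ← map_zpow₀, ← map_mul, hyp])
  -- powers acting on L
  have hpowL : ∀ (χ : L' ≃ₐ[K] L') (c : L ≃ₐ[K] L),
      (∀ x : L, χ (algebraMap L L' x) = algebraMap L L' (c x)) →
      ∀ (k : ℕ) (x : L), (χ ^ k) (algebraMap L L' x) = algebraMap L L' ((c ^ k) x) := by
    intro χ c hc k
    induction k with
    | zero => intro x; simp
    | succ k ih =>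
      intro x
      rw [pow_succ, pow_succ, AlgEquiv.mul_apply, AlgEquiv.mul_apply, hc, ih]
  have hσfix : ∀ (i : ℕ) (x : L), (σ ^ i) (algebraMap L L' x) = algebraMap L L' x := by
    intro i x
    have := hpowL σ 1 hσL i x
    simpa using this
  have hφ'pow : ∀ (k : ℕ) (x : L), (φ' ^ k) (algebraMap L L' x) = algebraMap L L' ((φ ^ k) x) :=
    hpowL φ' φ hφ'L
  -- σ powers on lam'
  have hσε : σ ε' = ε' := hσL' ε
  have hσpowl : ∀ i : ℕ, (σ ^ i) lam' = ε' ^ i * lam' := by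
    intro i
    induction i with
    | zero => simp
    | succ i ih =>
      rw [pow_succ', AlgEquiv.mul_apply, ih, map_mul, map_pow, hσε, hσl]
      ring
  -- order of σ is p
  have hσ1 : σ ≠ 1 := by
    intro h
    have h2 : ε' * lam' = 1 * lam' := by
      rw [one_mul, ← hσl, h]; rfl
    exact hε'.ne_one hp.one_lt (mul_right_cancel₀ hlam'0 h2)
  have hσp : σ ^ p = 1 := by
    apply albert_aux_ext hadj
    · intro x; rw [hσfix]; rfl
    · rw [hσpowl, hε'.pow_eq_one, one_mul]; rfl
  have hσord : orderOf σ = p := orderOf_eq_prime hσp hσ1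
  -- m divides the order of φ'
  have hφ1 : ∀ t : ℕ, φ' ^ t = 1 → φ ^ t = 1 := by
    intro t ht
    ext x
    apply hinj
    have := hφ'pow t x
    rw [ht] at this
    simpa using this.symm
  have hmdvd : m ∣ orderOf φ' := by
    rw [← hφord]
    exact orderOf_dvd_of_pow_eq_one (hφ1 _ (pow_orderOf_eq_one φ'))
  -- φ'^m is a power of σ
  have hφm1 : φ ^ m = 1 := by rw [← hφord]; exact pow_orderOf_eq_one φ
  have hφ'm : ∃ i < p, φ' ^ m = σ ^ i := by
    have h1 : ((φ' ^ m) lam') ^ p = algebraMap L L' lam := by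
      rw [← map_pow, hlp, hφ'pow, hφm1]
      rfl
    have hc1 : (((φ' ^ m) lam') * lam'⁻¹) ^ p = 1 := by
      rw [mul_pow, h1, inv_pow, hlp, mul_inv_cancel₀ hmaplam0]
    obtain ⟨i, hip, hi⟩ := hε'.eq_pow_of_pow_eq_one hc1
    refine ⟨i, hip, albert_aux_ext hadj ?_ ?_⟩
    · intro x
      rw [hφ'pow, hφm1, hσfix]
      rfl
    · rw [hσpowl, hi]
      field_simp
  obtain ⟨i0, hi0p, hφ'mσ⟩ := hφ'm
  have hφ'pm : φ' ^ (p * m) = 1 := by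
    rw [mul_comm, pow_mul, hφ'mσ, ← pow_mul, mul_comm i0 p, pow_mul, hσp, one_pow]
  -- σ and φ' commute
  have hφ'ε : φ' ε' = ε' ^ s := by
    have h1 : φ' (algebraMap L L' ε) = algebraMap L L' (φ ε) := hφ'L ε
    rw [hs, map_zpow₀] at h1
    exact h1
  have hcomm : Commute σ φ' := by
    show σ * φ' = φ' * σ
    apply albert_aux_ext hadj
    · intro x
      rw [AlgEquiv.mul_apply, AlgEquiv.mul_apply, hφ'L, hσL', hσL', hφ'L]
    · have hLHS : (σ * φ') lam' = algebraMap L L' y * (ε' ^ s * lam' ^ s) := by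
        rw [AlgEquiv.mul_apply, hφ'l, map_mul, hσL' y, map_zpow₀, hσl, mul_zpow]
      have hRHS : (φ' * σ) lam' = ε' ^ s * (algebraMap L L' y * lam' ^ s) := by
        rw [AlgEquiv.mul_apply, hσl, map_mul, hφ'ε, hφ'l]
      rw [hLHS, hRHS]
      ring
  -- counting automorphisms
  have hcard_le : Fintype.card (L' ≃ₐ[K] L') ≤ p * m := by
    calc Fintype.card (L' ≃ₐ[K] L') = Fintype.card (L' →ₐ[K] L') :=
          Fintype.card_congr (algEquivEquivAlgHom K L').toEquiv
    _ ≤ finrank L' (L' →ₗ[K] L') := finrank_algHom K L'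
    _ = finrank K L' := Module.finrank_linearMap_self K L' L'
    _ = p * m := hrkKL'
  have hinjF : Function.Injective
      (fun ik : Fin p × Fin m => σ ^ (ik.1 : ℕ) * φ' ^ (ik.2 : ℕ)) := by
    rintro ⟨i, k⟩ ⟨j, l⟩ h
    simp only at h
    have hkl : φ ^ (k : ℕ) = φ ^ (l : ℕ) := by
      ext x
      apply hinj
      have h1 := congrArg (fun χ : L' ≃ₐ[K] L' => χ (algebraMap L L' x)) h
      simp only [AlgEquiv.mul_apply] at h1
      rw [hφ'pow, hφ'pow, hσfix, hσfix] at h1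
      exact h1
    have hkl2' : (k : ℕ) = (l : ℕ) := by
      have hmod := pow_eq_pow_iff_modEq.mp hkl
      rw [hφord] at hmod
      have hk := k.2
      have hl := l.2
      unfold Nat.ModEq at hmod
      rw [Nat.mod_eq_of_lt hk, Nat.mod_eq_of_lt hl] at hmod
      exact hmod
    have hσij : σ ^ (i : ℕ) = σ ^ (j : ℕ) := by
      have h2 : σ ^ (i : ℕ) * φ' ^ (k : ℕ) = σ ^ (j : ℕ) * φ' ^ (k : ℕ) := by
        rw [h, hkl2']
      exact mul_right_cancel h2
    have hij : (i : ℕ) = (j : ℕ) := by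
      have h3 := congrArg (fun χ : L' ≃ₐ[K] L' => χ lam') hσij
      simp only [hσpowl] at h3
      have h4 : ε' ^ (i : ℕ) = ε' ^ (j : ℕ) := mul_right_cancel₀ hlam'0 h3
      exact hε'.pow_inj i.2 j.2 h4
    exact Prod.ext (Fin.ext hij) (Fin.ext hkl2')
  have hcard_ge : p * m ≤ Fintype.card (L' ≃ₐ[K] L') := by
    have := Fintype.card_le_of_injective _ hinjF
    simpa using this
  have hcard : Fintype.card (L' ≃ₐ[K] L') = p * m := le_antisymm hcard_le hcard_ge
  haveI hGalKL' : IsGalois K L' := IsGalois.of_card_aut_eq_finrank K L' (by rw [Nat.card_eq_fintype_card, hcard, hrkKL'])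
  -- cyclicity
  have hNatcard : Nat.card (L' ≃ₐ[K] L') = p * m := by
    rw [Nat.card_eq_fintype_card, hcard]
  have hordφ'dvd : orderOf φ' ∣ p * m := orderOf_dvd_of_pow_eq_one hφ'pm
  have hcop : Nat.Coprime p m := (hp.coprime_iff_not_dvd).mpr hpm
  have hcyc : IsCyclic (L' ≃ₐ[K] L') := by
    by_cases hcase : orderOf φ' = p * m
    · exact isCyclic_of_orderOf_eq_card φ' (by rw [hNatcard, hcase])
    · have hφ'ord : orderOf φ' = m := by
        obtain ⟨d, hd⟩ := hmdvd
        have hddvd : d ∣ p := by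
          have h5 : m * d ∣ m * p := by rw [← hd, mul_comm m p]; exact hordφ'dvd
          exact (Nat.mul_dvd_mul_iff_left hm0).mp h5
        rcases (Nat.Prime.eq_one_or_self_of_dvd hp d hddvd) with h6 | h6
        · rw [hd, h6, mul_one]
        · exfalso; exact hcase (by rw [hd, h6, mul_comm])
      have hord : orderOf (σ * φ') = p * m := by
        rw [hcomm.orderOf_mul_eq_mul_orderOf_of_coprime (by rw [hσord, hφ'ord]; exact hcop),
          hσord, hφ'ord]
      exact isCyclic_of_orderOf_eq_card _ (by rw [hNatcard, hord])
  refine ⟨hGalKL', hcyc, by rw [hrkKL'], ?_⟩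
  -- the degree-p subextension
  obtain ⟨g, hg⟩ := hcyc.exists_generator
  have hgord : orderOf g = p * m := by
    rw [← Nat.card_zpowers, (Subgroup.eq_top_iff' _).mpr hg, Subgroup.card_top, hNatcard]
  set H := Subgroup.zpowers (g ^ p) with hH
  have hcommG : ∀ a b : (L' ≃ₐ[K] L'), a * b = b * a := by
    intro a b
    obtain ⟨n, rfl⟩ := hg a
    obtain ⟨k, rfl⟩ := hg b
    rw [← zpow_add, ← zpow_add, add_comm]
  haveI hHnorm : H.Normal := ⟨by
    intro n hn b
    rw [hcommG b n, mul_assoc, mul_inv_cancel, mul_one]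
    exact hn⟩
  set E := IntermediateField.fixedField H with hE
  have hcardH : Nat.card H = m := by
    rw [Nat.card_zpowers, orderOf_pow, hgord]
    rw [Nat.gcd_comm]
    have hgcd : Nat.gcd p (p * m) = p := Nat.gcd_eq_left (dvd_mul_right p m)
    rw [hgcd, Nat.mul_div_cancel_left m hppos]
  have hrkEL' : finrank E L' = m := by
    classical
    rw [IntermediateField.finrank_fixedField_eq_card, hcardH]
  have hrkKE : finrank K E = p := by
    have h := Module.finrank_mul_finrank K E L'
    rw [hrkEL', hrkKL'] at h
    exact Nat.eq_of_mul_eq_mul_right hm0 h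
  haveI hGalKE : IsGalois K E := IsGalois.of_fixedField_normal_subgroup H
  have hcycE : IsCyclic (E ≃ₐ[K] E) := by
    have hcardE : Nat.card (E ≃ₐ[K] E) = p := by
      rw [IsGalois.card_aut_eq_finrank, hrkKE]
    exact isCyclic_of_prime_card hcardE
  exact ⟨E, hrkKE, hGalKE, hcycE⟩
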